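/- Let R = [a,b] × [c,d] be a closed rectangle, identified with a subset of ℂ, and let f : U → ℂ be a function on an open neighborhood U of R that is real-differentiable (differentiable as a map of two real variables) at every point of U, with ∂̄f Lebesgue integrable on R, where ∂̄f = (1/2)(∂f/∂x + i ∂f/∂y). Then the complex line integral of f over the positively oriented boundary ∂R satisfies ∮_{∂R} f(z) dz = 2i ∫∫_R ∂̄f(z) dA(z). -/

import Mathlib

open MeasureTheory Complex Set

private theorem rect_integral_eq (a b c d : ℝ) (hab : a ≤ b) (hcd : c ≤ d) (g : ℂ → ℂ)
    (hg : IntegrableOn g (Set.Icc a b ×ℂ Set.Icc c d)) :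
    (∫ z in Set.Icc a b ×ℂ Set.Icc c d, g z) =
      ∫ x in a..b, ∫ y in c..d, g (x + y * Complex.I) := by
  rw [← (volume_preserving_equiv_real_prod.symm _).setIntegral_preimage_emb
    (MeasurableEquiv.measurableEmbedding _)]
  rw [← (volume_preserving_equiv_real_prod.symm _).integrableOn_comp_preimage
    (MeasurableEquiv.measurableEmbedding _)] at hg
  have hpre : (measurableEquivRealProd.symm ⁻¹' (Set.Icc a b ×ℂ Set.Icc c d))
      = Set.Icc a b ×ˢ Set.Icc c d := rfl
  rw [hpre] at hg ⊢
  simp only [Function.comp_def] at hg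
  rw [Measure.volume_eq_prod] at hg ⊢
  rw [setIntegral_prod _ hg]
  rw [intervalIntegral.integral_of_le hab, ← integral_Icc_eq_integral_Ioc]
  refine setIntegral_congr_fun measurableSet_Icc fun x _ => ?_
  rw [intervalIntegral.integral_of_le hcd, ← integral_Icc_eq_integral_Ioc]
  refine setIntegral_congr_fun measurableSet_Icc fun y _ => ?_
  congr 1
  exact (Complex.mk_eq_add_mul_I x y)

theorem complex_line_integral_boundary_rect_eq_dbar
    (a b c d : ℝ) (hab : a ≤ b) (hcd : c ≤ d)
    (U : Set ℂ) (hU : IsOpen U)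
    (hR : {z : ℂ | z.re ∈ Set.Icc a b ∧ z.im ∈ Set.Icc c d} ⊆ U)
    (f : ℂ → ℂ) (f' : ℂ → (ℂ →L[ℝ] ℂ))
    (hf : ∀ z ∈ U, HasFDerivAt f (f' z) z)
    (hInt : IntegrableOn (fun z => (f' z 1 + Complex.I * f' z Complex.I) / 2)
      {z : ℂ | z.re ∈ Set.Icc a b ∧ z.im ∈ Set.Icc c d} volume) :
    ((∫ x in a..b, f (x + c * Complex.I)) +
        Complex.I * (∫ y in c..d, f (b + y * Complex.I)) -
        (∫ x in a..b, f (x + d * Complex.I)) -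
        Complex.I * (∫ y in c..d, f (a + y * Complex.I))) =
      2 * Complex.I *
        ∫ z in {z : ℂ | z.re ∈ Set.Icc a b ∧ z.im ∈ Set.Icc c d},
          (f' z 1 + Complex.I * f' z Complex.I) / 2 := by
  have hset : {z : ℂ | z.re ∈ Set.Icc a b ∧ z.im ∈ Set.Icc c d}
      = Set.Icc a b ×ℂ Set.Icc c d := rfl
  have key : ∀ z : ℂ, Complex.I * f' z 1 - f' z Complex.I
      = 2 * Complex.I * ((f' z 1 + Complex.I * f' z Complex.I) / 2) := by
    intro z
    linear_combination (-(f' z Complex.I)) * Complex.I_mul_I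
  have hg : IntegrableOn (fun z => Complex.I * f' z 1 - f' z Complex.I)
      (Set.Icc a b ×ℂ Set.Icc c d) := by
    rw [hset] at hInt
    have := hInt.const_mul (2 * Complex.I)
    simp only [← key] at this
    exact this
  have Hc : ContinuousOn f (Set.uIcc a b ×ℂ Set.uIcc c d) := by
    intro z hz
    refine (hf z (hR ?_)).continuousAt.continuousWithinAt
    rw [uIcc_of_le hab, uIcc_of_le hcd] at hz
    exact hz
  have Hd : ∀ x ∈ Set.Ioo (min a b) (max a b) ×ℂ Set.Ioo (min c d) (max c d),
      HasFDerivAt f (f' x) x := by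
    intro x hx
    refine hf x (hR ?_)
    rw [min_eq_left hab, max_eq_right hab, min_eq_left hcd, max_eq_right hcd] at hx
    exact ⟨Set.Ioo_subset_Icc_self hx.1, Set.Ioo_subset_Icc_self hx.2⟩
  have Hi : IntegrableOn (fun z => Complex.I * f' z 1 - f' z Complex.I)
      (Set.uIcc a b ×ℂ Set.uIcc c d) := by
    rw [uIcc_of_le hab, uIcc_of_le hcd]; exact hg
  have main := Complex.integral_boundary_rect_of_continuousOn_of_hasFDerivAt_real f f'
    (⟨a, c⟩ : ℂ) (⟨b, d⟩ : ℂ) Hc Hd Hi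
  try simp only [smul_eq_mul] at main
  have hrhs : (∫ x in a..b, ∫ y in c..d,
        Complex.I * f' (x + y * Complex.I) 1 - f' (x + y * Complex.I) Complex.I)
      = 2 * Complex.I * ∫ z in Set.Icc a b ×ℂ Set.Icc c d,
          (f' z 1 + Complex.I * f' z Complex.I) / 2 := by
    rw [← rect_integral_eq a b c d hab hcd _ hg]
    rw [← MeasureTheory.integral_const_mul]
    refine setIntegral_congr_fun ((measurable_re measurableSet_Icc).inter (measurable_im measurableSet_Icc))
      fun z _ => ?_
    simpa using key z
  rw [hset, ← hrhs, ← main]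
  show _ = (∫ x in a..b, f (x + c * Complex.I)) - (∫ x in a..b, f (x + d * Complex.I)) +
      Complex.I * (∫ y in c..d, f (b + y * Complex.I)) -
      Complex.I * (∫ y in c..d, f (a + y * Complex.I))
  ring
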